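/- Let f : [0,1] → ℝ be L-Lipschitz. For M ∈ ℕ, let {φ_m}_{m=0}^M be the partition of unity φ_m(t) = ψ(3M(t − m/M)) (ψ trapezoidal as above), and define f̃(t) = Σ_{m=0}^M φ_m(t)·f(m/M). Then (i) ‖f̃ − f‖_{L∞([0,1])} ≤ (2/(3M))·L, and (ii) f̃ is 5L-Lipschitz on [0,1]. -/

import Mathlib

/-- The trapezoidal hat function: `ψ(z) = 1` for `|z| ≤ 1`, `ψ(z) = 2 - |z|` for
`1 ≤ |z| ≤ 2`, and `ψ(z) = 0` for `|z| > 2`. -/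
noncomputable def trap (z : ℝ) : ℝ :=
  if |z| ≤ 1 then 1 else if |z| ≤ 2 then 2 - |z| else 0

/-- `φ_m(t) = ψ(3M(t - m/M))`. -/
noncomputable def pou (M m : ℕ) (t : ℝ) : ℝ :=
  trap (3 * (M : ℝ) * (t - (m : ℝ) / (M : ℝ)))

lemma trap_nonneg (z : ℝ) : 0 ≤ trap z := by
  unfold trap; split_ifs with h1 h2 <;> norm_num <;> linarith

lemma trap_eq_zero {z : ℝ} (h : 2 ≤ |z|) : trap z = 0 := by
  unfold trap
  split_ifs with h1 h2
  · linarith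
  · linarith
  · rfl

lemma trap_eq_one {z : ℝ} (h : |z| ≤ 1) : trap z = 1 := by
  unfold trap; rw [if_pos h]

lemma trap_lip (a b : ℝ) : |trap a - trap b| ≤ |a - b| := by
  have h1 := abs_sub_abs_le_abs_sub a b
  have h2 := abs_sub_abs_le_abs_sub b a
  have h3 := abs_nonneg a
  have h4 := abs_nonneg b
  have h5 : |b - a| = |a - b| := abs_sub_comm b a
  unfold trap
  split_ifs <;> rw [abs_le] <;> constructor <;> linarith

lemma trap_add (θ : ℝ) (h0 : 0 ≤ θ) (h1 : θ ≤ 1) : trap (3 * θ) + trap (3 * θ - 3) = 1 := by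
  unfold trap
  rw [abs_of_nonneg (by linarith), abs_of_nonpos (by linarith)]
  split_ifs <;> linarith

lemma pou_arg (M m : ℕ) (hM : 1 ≤ M) (t : ℝ) :
    pou M m t = trap (3 * ((M : ℝ) * t - m)) := by
  have hM0 : (M : ℝ) ≠ 0 := by
    have : (0:ℝ) < M := by exact_mod_cast Nat.lt_of_lt_of_le Nat.zero_lt_one hM
    exact ne_of_gt this
  unfold pou
  congr 1
  field_simp

lemma pou_nonneg (M m : ℕ) (t : ℝ) : 0 ≤ pou M m t := trap_nonneg _

lemma pou_eq_zero {M m : ℕ} (hM : 1 ≤ M) {t : ℝ} (h : (2:ℝ)/3 ≤ |(M : ℝ) * t - m|) :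
    pou M m t = 0 := by
  rw [pou_arg M m hM]
  apply trap_eq_zero
  rw [abs_mul, abs_of_nonneg (by norm_num : (0:ℝ) ≤ 3)]
  linarith

lemma pou_lip (M m : ℕ) (s t : ℝ) :
    |pou M m t - pou M m s| ≤ 3 * (M : ℝ) * |t - s| := by
  unfold pou
  refine (trap_lip _ _).trans ?_
  have h : 3 * (M:ℝ) * (t - m / M) - 3 * M * (s - m / M) = 3 * M * (t - s) := by ring
  rw [h, abs_mul, abs_of_nonneg (by positivity : (0:ℝ) ≤ 3 * (M:ℝ))]

lemma pou_sum (M : ℕ) (hM : 1 ≤ M) (t : ℝ) (ht : t ∈ Set.Icc (0:ℝ) 1) :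
    ∑ m ∈ Finset.range (M + 1), pou M m t = 1 := by
  obtain ⟨ht0, ht1⟩ := ht
  have hM0 : (0:ℝ) < M := by exact_mod_cast Nat.lt_of_lt_of_le Nat.zero_lt_one hM
  set k := ⌊(M:ℝ) * t⌋₊ with hkdef
  have hk1 : (k:ℝ) ≤ (M:ℝ) * t := Nat.floor_le (by positivity)
  have hk2 : (M:ℝ) * t < k + 1 := Nat.lt_floor_add_one _
  have hkM : k ≤ M := by
    have h : (M:ℝ) * t ≤ (M:ℝ) := by nlinarith
    calc k ≤ ⌊(M:ℝ)⌋₊ := Nat.floor_le_floor h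
      _ = M := Nat.floor_natCast M
  have hzero : ∀ m : ℕ, m ≠ k → m ≠ k + 1 → pou M m t = 0 := by
    intro m hm1 hm2
    apply pou_eq_zero hM
    rcases lt_or_gt_of_ne hm1 with h | h
    · have : (m:ℝ) + 1 ≤ k := by exact_mod_cast h
      rw [le_abs]; left; linarith
    · have h' : k + 1 < m := lt_of_le_of_ne h (Ne.symm hm2)
      have : (k:ℝ) + 2 ≤ m := by exact_mod_cast h'
      rw [le_abs]; right; linarith
  by_cases hkM' : k = M
  · rw [Finset.sum_eq_single k
      (fun m hmm hm => hzero m hm (by simp only [Finset.mem_range] at hmm; omega))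
      (fun h => absurd (Finset.mem_range.mpr (by omega)) h)]
    rw [pou_arg M k hM]
    apply trap_eq_one
    have hMk : (M:ℝ) * t = k := by
      have : ((M:ℕ):ℝ) ≤ (k:ℝ) := by exact_mod_cast le_of_eq hkM'.symm
      nlinarith
    rw [hMk]
    simp
  · have hklt : k < M := lt_of_le_of_ne hkM hkM'
    rw [Finset.sum_eq_add_of_mem k (k+1)
      (Finset.mem_range.mpr (by omega)) (Finset.mem_range.mpr (by omega)) (by omega)
      (fun m _ hm => hzero m hm.1 hm.2)]
    rw [pou_arg M k hM, pou_arg M (k+1) hM]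
    have e2 : 3 * ((M:ℝ) * t - ((k:ℕ)+1:ℕ)) = 3 * ((M:ℝ)*t - k) - 3 := by push_cast; ring
    rw [e2]
    exact trap_add ((M:ℝ)*t - k) (by linarith) (by linarith)

/-- for an `L`-Lipschitz `f : [0,1] → ℝ`, the quasi-interpolant
`f̃(t) = Σ_{m=0}^M φ_m(t)·f(m/M)` satisfies (i) `‖f̃ - f‖_{L∞([0,1])} ≤ (2/(3M))·L`
and (ii) `f̃` is `5L`-Lipschitz on `[0,1]`. -/
theorem stmt10 (M : ℕ) (hM : 1 ≤ M) (L : ℝ) (hL : 0 ≤ L)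
    (f : ℝ → ℝ)
    (hf : ∀ s ∈ Set.Icc (0 : ℝ) 1, ∀ t ∈ Set.Icc (0 : ℝ) 1, |f t - f s| ≤ L * |t - s|)
    (ftil : ℝ → ℝ)
    (hftil : ∀ t, ftil t = ∑ m ∈ Finset.range (M + 1), pou M m t * f ((m : ℝ) / M)) :
    (∀ t ∈ Set.Icc (0 : ℝ) 1, |ftil t - f t| ≤ 2 / (3 * (M : ℝ)) * L) ∧
      ∀ s ∈ Set.Icc (0 : ℝ) 1, ∀ t ∈ Set.Icc (0 : ℝ) 1,
        |ftil t - ftil s| ≤ 5 * L * |t - s| := by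
  have hM0 : (0:ℝ) < M := by exact_mod_cast Nat.lt_of_lt_of_le Nat.zero_lt_one hM
  have hM1 : (1:ℝ) ≤ M := by exact_mod_cast hM
  have hmem : ∀ m : ℕ, m ≤ M → (m:ℝ)/M ∈ Set.Icc (0:ℝ) 1 := by
    intro m hm
    constructor
    · positivity
    · rw [div_le_one hM0]; exact_mod_cast hm
  -- Part (i)
  have hi : ∀ t ∈ Set.Icc (0:ℝ) 1, |ftil t - f t| ≤ 2 / (3 * (M:ℝ)) * L := by
    intro t ht
    have key : ftil t - f t = ∑ m ∈ Finset.range (M+1), pou M m t * (f (m/M) - f t) := by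
      have h2 : ∑ m ∈ Finset.range (M+1), pou M m t * (f (m/M) - f t)
          = (∑ m ∈ Finset.range (M+1), pou M m t * f (m/M))
            - (∑ m ∈ Finset.range (M+1), pou M m t) * f t := by
        rw [Finset.sum_mul, ← Finset.sum_sub_distrib]
        exact Finset.sum_congr rfl (fun m _ => by ring)
      rw [hftil t, h2, pou_sum M hM t ht, one_mul]
    rw [key]
    refine (Finset.abs_sum_le_sum_abs _ _).trans ?_
    have hbd : ∀ m ∈ Finset.range (M+1),
        |pou M m t * (f (m/M) - f t)| ≤ pou M m t * (2 / (3 * (M:ℝ)) * L) := by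
      intro m hm
      by_cases hz : pou M m t = 0
      · rw [hz]; simp
      · have hsupp : |(M:ℝ) * t - m| < 2/3 := by
          by_contra h
          exact hz (pou_eq_zero hM (le_of_not_gt h))
        have hdist : |(m:ℝ)/M - t| ≤ 2 / (3 * (M:ℝ)) := by
          have e : (m:ℝ)/M - t = -(((M:ℝ) * t - m)/M) := by field_simp; ring
          rw [e, abs_neg, abs_div, abs_of_nonneg (le_of_lt hM0),
            div_le_div_iff₀ hM0 (by positivity)]
          nlinarith [hsupp]
        have hfd : |f ((m:ℝ)/M) - f t| ≤ L * (2 / (3 * (M:ℝ))) := by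
          refine (hf t ht ((m:ℝ)/M) (hmem m (Nat.lt_succ_iff.mp (Finset.mem_range.mp hm)))).trans ?_
          exact mul_le_mul_of_nonneg_left hdist hL
        rw [abs_mul, abs_of_nonneg (pou_nonneg M m t)]
        refine mul_le_mul_of_nonneg_left ?_ (pou_nonneg M m t)
        rw [mul_comm (2 / (3 * (M:ℝ))) L]
        exact hfd
    refine (Finset.sum_le_sum hbd).trans ?_
    rw [← Finset.sum_mul, pou_sum M hM t ht, one_mul]
  refine ⟨hi, ?_⟩
  -- Part (ii)
  intro s hs t ht
  by_cases hfar : 1 / (3 * (M:ℝ)) ≤ |t - s|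
  · -- far case
    have h1 := hi t ht
    have h2 := hi s hs
    have h3 := hf s hs t ht
    have h4 : L * (1 / (3 * (M:ℝ))) ≤ L * |t - s| := mul_le_mul_of_nonneg_left hfar hL
    have e : 2 / (3 * (M:ℝ)) * L = 2 * (L * (1 / (3 * (M:ℝ)))) := by ring
    have tr1 := abs_sub_le (ftil t) (f t) (ftil s)
    have tr2 := abs_sub_le (f t) (f s) (ftil s)
    have hcomm : |f s - ftil s| = |ftil s - f s| := abs_sub_comm _ _
    rw [e] at h1 h2
    rw [hcomm] at tr2
    linarith
  · -- near case
    push_neg at hfar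
    obtain ⟨ht0, ht1⟩ := ht
    set k := ⌊(M:ℝ) * t⌋₊ with hkdef
    have hk1 : (k:ℝ) ≤ (M:ℝ) * t := Nat.floor_le (by positivity)
    have hk2 : (M:ℝ) * t < k + 1 := Nat.lt_floor_add_one _
    have hkM : k ≤ M := by
      have h : (M:ℝ) * t ≤ (M:ℝ) := by nlinarith
      calc k ≤ ⌊(M:ℝ)⌋₊ := Nat.floor_le_floor h
        _ = M := Nat.floor_natCast M
    have hMts : (M:ℝ) * |t - s| < 1/3 := by
      have h := mul_lt_mul_of_pos_left hfar hM0
      have e : (M:ℝ) * (1 / (3 * (M:ℝ))) = 1/3 := by field_simp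
      rw [e] at h
      exact h
    have hzero : ∀ m : ℕ, m ≠ k → m ≠ k + 1 → pou M m t = 0 ∧ pou M m s = 0 := by
      intro m hm1 hm2
      have hfar_t : (1:ℝ) ≤ |(M:ℝ) * t - m| := by
        rcases lt_or_gt_of_ne hm1 with h | h
        · have : (m:ℝ) + 1 ≤ k := by exact_mod_cast h
          rw [le_abs]; left; linarith
        · have h' : k + 1 < m := lt_of_le_of_ne h (Ne.symm hm2)
          have : (k:ℝ) + 2 ≤ m := by exact_mod_cast h'
          rw [le_abs]; right; linarith
      have hfar_s : (2:ℝ)/3 ≤ |(M:ℝ) * s - m| := by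
        have hsub := abs_sub_abs_le_abs_sub ((M:ℝ) * t - m) ((M:ℝ) * (t - s))
        have e : (M:ℝ) * t - m - (M:ℝ) * (t - s) = (M:ℝ) * s - m := by ring
        rw [e] at hsub
        have e2 : |(M:ℝ) * (t - s)| = (M:ℝ) * |t - s| := by
          rw [abs_mul, abs_of_nonneg (le_of_lt hM0)]
        rw [e2] at hsub
        linarith
      exact ⟨pou_eq_zero hM (by linarith), pou_eq_zero hM hfar_s⟩
    by_cases hkM' : k = M
    · -- single active index: both interpolants equal f(k/M)
      have hsingle : ∀ u ∈ Set.Icc (0:ℝ) 1, (∀ m : ℕ, m ≠ k → m ≠ k+1 → pou M m u = 0) →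
          ftil u = f ((k:ℝ)/M) := by
        intro u hu hz
        have hs1 : ∑ m ∈ Finset.range (M+1), pou M m u = pou M k u :=
          Finset.sum_eq_single k
            (fun m hmm hm => hz m hm (by simp only [Finset.mem_range] at hmm; omega))
            (fun h => absurd (Finset.mem_range.mpr (by omega)) h)
        have hp1 : pou M k u = 1 := by rw [← hs1, pou_sum M hM u hu]
        rw [hftil u, Finset.sum_eq_single k
          (fun m hmm hm => by
            rw [hz m hm (by simp only [Finset.mem_range] at hmm; omega), zero_mul])
          (fun h => absurd (Finset.mem_range.mpr (by omega)) h), hp1, one_mul]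
      have hT := hsingle t ⟨ht0, ht1⟩ (fun m h1 h2 => (hzero m h1 h2).1)
      have hS := hsingle s hs (fun m h1 h2 => (hzero m h1 h2).2)
      rw [hT, hS, sub_self, abs_zero]
      positivity
    · -- two active indices k, k+1
      have hklt : k < M := lt_of_le_of_ne hkM hkM'
      have hexp : ∀ u ∈ Set.Icc (0:ℝ) 1, (∀ m : ℕ, m ≠ k → m ≠ k+1 → pou M m u = 0) →
          ftil u = pou M k u * f ((k:ℝ)/M) + pou M (k+1) u * f (((k+1:ℕ):ℝ)/M) ∧
          pou M k u + pou M (k+1) u = 1 := by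
        intro u hu hz
        constructor
        · rw [hftil u]
          exact Finset.sum_eq_add_of_mem k (k+1)
            (Finset.mem_range.mpr (by omega)) (Finset.mem_range.mpr (by omega)) (by omega)
            (fun m _ hm => by rw [hz m hm.1 hm.2, zero_mul])
        · have := pou_sum M hM u hu
          rw [Finset.sum_eq_add_of_mem k (k+1)
            (Finset.mem_range.mpr (by omega)) (Finset.mem_range.mpr (by omega)) (by omega)
            (fun m _ hm => hz m hm.1 hm.2)] at this
          exact this
      obtain ⟨hTe, hTs⟩ := hexp t ⟨ht0, ht1⟩ (fun m h1 h2 => (hzero m h1 h2).1)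
      obtain ⟨hSe, hSs⟩ := hexp s hs (fun m h1 h2 => (hzero m h1 h2).2)
      have key : ftil t - ftil s =
          (pou M (k+1) t - pou M (k+1) s) * (f (((k+1:ℕ):ℝ)/M) - f ((k:ℝ)/M)) := by
        rw [hTe, hSe]
        have e1 : pou M k t = 1 - pou M (k+1) t := by linarith
        have e2 : pou M k s = 1 - pou M (k+1) s := by linarith
        rw [e1, e2]; ring
      rw [key, abs_mul]
      have hplip : |pou M (k+1) t - pou M (k+1) s| ≤ 3 * (M:ℝ) * |t - s| :=
        pou_lip M (k+1) s t
      have hfd : |f (((k+1:ℕ):ℝ)/M) - f ((k:ℝ)/M)| ≤ L * (1 / (M:ℝ)) := by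
        refine (hf ((k:ℝ)/M) (hmem k (by omega)) (((k+1:ℕ):ℝ)/M) (hmem (k+1) (by omega))).trans ?_
        have e : |((k+1:ℕ):ℝ)/M - (k:ℝ)/M| = 1 / (M:ℝ) := by
          push_cast
          rw [div_sub_div_same]
          have : (k:ℝ) + 1 - k = 1 := by ring
          rw [this, abs_of_nonneg (by positivity)]
        rw [e]
      calc |pou M (k+1) t - pou M (k+1) s| * |f (((k+1:ℕ):ℝ)/M) - f ((k:ℝ)/M)|
          ≤ (3 * (M:ℝ) * |t - s|) * (L * (1 / (M:ℝ))) := by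
            apply mul_le_mul hplip hfd (abs_nonneg _) (by positivity)
        _ = 3 * L * |t - s| := by field_simp
        _ ≤ 5 * L * |t - s| := by nlinarith [abs_nonneg (t - s), mul_nonneg hL (abs_nonneg (t-s))]
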